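/- For every real number x ≥ 0, √(1 + x²) + e^x − (1 + x) ≤ e^{(e/2)·x²}, where e is Euler's number. -/
import Mathlib

theorem stmt16 : ∀ x : ℝ, 0 ≤ x →
    Real.sqrt (1 + x ^ 2) + Real.exp x - (1 + x) ≤ Real.exp (Real.exp 1 / 2 * x ^ 2) := by
  intro x hx
  have he : (2.7182818283 : ℝ) < Real.exp 1 := Real.exp_one_gt_d9
  rcases le_or_gt x 1 with h1 | h1
  · -- x ≤ 1 : use quadratic bounds
    have hsq : Real.sqrt (1 + x ^ 2) ≤ 1 + x ^ 2 / 2 := by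
      rw [show (1 : ℝ) + x ^ 2 / 2 = Real.sqrt ((1 + x ^ 2 / 2) ^ 2) by
        rw [Real.sqrt_sq (by positivity)]]
      apply Real.sqrt_le_sqrt
      nlinarith [sq_nonneg x]
    have hexp : Real.exp x ≤ 1 + x + x ^ 2 * (3 : ℝ) / 4 := by
      have := Real.exp_bound' hx h1 (n := 2) (by norm_num)
      simp [Finset.sum_range_succ, Nat.factorial] at this
      linarith
    have hrhs : Real.exp 1 / 2 * x ^ 2 + 1 ≤ Real.exp (Real.exp 1 / 2 * x ^ 2) :=
      Real.add_one_le_exp _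
    nlinarith [sq_nonneg x]
  · -- x ≥ 1
    have hsq : Real.sqrt (1 + x ^ 2) ≤ 1 + x := by
      rw [show (1 : ℝ) + x = Real.sqrt ((1 + x) ^ 2) by
        rw [Real.sqrt_sq (by positivity)]]
      apply Real.sqrt_le_sqrt
      nlinarith
    have hexp : Real.exp x ≤ Real.exp (Real.exp 1 / 2 * x ^ 2) := by
      apply Real.exp_le_exp.2
      nlinarith
    linarith
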